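/- Let E₁ and E₂ be complex Banach spaces with open unit balls B₁ and B₂, and let f : B₁ → B₂ be a holomorphic map with f(0) = 0 such that the derivative f'(0) is an isometry (‖f'(0)·x‖ = ‖x‖ for all x ∈ E₁). If there exists a continuous linear projection π : E₂ → E₂ with π ∘ π = π, range π = f'(0)(E₁), and ‖π‖ = 1, then f is injective on B₁ and is a biholomorphism of B₁ onto its image f(B₁); that is, f is injective on B₁ and there is a holomorphic map g defined on a neighbourhood of f(B₁) in f(B₁) with g(f(x)) = x for all x ∈ B₁. -/

import Mathlib

namespace Stmt0Aux

open Set Metric Filter Function FormalMultilinearSeries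
open scoped Topology Real NNReal

variable {E F G : Type*} [NormedAddCommGroup E] [NormedSpace ℂ E]
  [NormedAddCommGroup F] [NormedSpace ℂ F] [NormedAddCommGroup G] [NormedSpace ℂ G]

lemma exists_big_block {m : ℕ} {c : Composition m} (hc : c ≠ Composition.ones m) :
    ∃ i : Fin c.length, 2 ≤ c.blocksFun i := by
  obtain ⟨k, hk, lk⟩ := Composition.ne_ones_iff.1 hc
  obtain ⟨i, hi⟩ : ∃ (i : Fin c.blocks.length), c.blocks[i] = k := List.get_of_mem hk
  refine ⟨⟨i.val, c.blocks_length ▸ i.prop⟩, ?_⟩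
  have : c.blocksFun ⟨i.val, c.blocks_length ▸ i.prop⟩ = k := by
    simp only [Composition.blocksFun]
    convert hi
    rfl
  omega

lemma compAlong_diag_zero (p : FormalMultilinearSeries ℂ F G)
    (q : FormalMultilinearSeries ℂ E F) {m : ℕ} (c : Composition m) (i : Fin c.length)
    {x : E} (h : q (c.blocksFun i) (fun _ => x) = 0) :
    (p.compAlongComposition q c) (fun _ => x) = 0 := by
  rw [FormalMultilinearSeries.compAlongComposition_apply]
  apply ContinuousMultilinearMap.map_coord_zero _ i
  simp only [FormalMultilinearSeries.applyComposition]
  exact h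

lemma compAlong_diag_ones (p : FormalMultilinearSeries ℂ F G)
    (q : FormalMultilinearSeries ℂ E F) {x : E} {y : F}
    (hq1 : q 1 (fun _ => x) = y) (m : ℕ) :
    (p.compAlongComposition q (Composition.ones m)) (fun _ => x) = p m (fun _ => y) := by
  rw [FormalMultilinearSeries.compAlongComposition_apply,
    FormalMultilinearSeries.applyComposition_ones]
  simp only [hq1]
  exact p.congr (Composition.ones_length m) (fun i him hin => rfl)

lemma compAlong_diag_single (p : FormalMultilinearSeries ℂ F G)
    (q : FormalMultilinearSeries ℂ E F) {m : ℕ} (hm : 0 < m) (x : E) :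
    (p.compAlongComposition q (Composition.single m hm)) (fun _ => x)
      = p 1 (fun _ => q m (fun _ => x)) := by
  rw [FormalMultilinearSeries.compAlongComposition_apply,
    FormalMultilinearSeries.applyComposition_single q hm]
  exact p.congr (Composition.single_length hm) (fun i him hin => rfl)

lemma comp_diag_sum (p : FormalMultilinearSeries ℂ F G) (q : FormalMultilinearSeries ℂ E F)
    (m : ℕ) (x : E) :
    (p.comp q) m (fun _ => x)
      = ∑ c : Composition m, (p.compAlongComposition q c) (fun _ => x) := by
  have h : (p.comp q) m = ∑ c : Composition m, p.compAlongComposition q c := rfl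
  rw [h, ContinuousMultilinearMap.sum_apply]

lemma comp_diag (p q : FormalMultilinearSeries ℂ E E) {k : ℕ} (hk : 2 ≤ k)
    (hp1 : ∀ y, p 1 (fun _ => y) = y)
    (hpm : ∀ j, 2 ≤ j → j < k → ∀ x, p j (fun _ => x) = 0)
    (hq1 : ∀ y, q 1 (fun _ => y) = y)
    (hqm : ∀ j, 2 ≤ j → j < k → ∀ x, q j (fun _ => x) = 0) :
    (∀ y, (p.comp q) 1 (fun _ => y) = y) ∧
    (∀ j, 2 ≤ j → j < k → ∀ x, (p.comp q) j (fun _ => x) = 0) ∧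
    ∀ x, (p.comp q) k (fun _ => x) = p k (fun _ => x) + q k (fun _ => x) := by
  refine ⟨?_, ?_, ?_⟩
  · intro y
    rw [FormalMultilinearSeries.comp_coeff_one]
    simp only [hq1, hp1]
  · intro j h2 hjk x
    rw [comp_diag_sum]
    apply Finset.sum_eq_zero
    intro c _
    by_cases hc : c = Composition.ones j
    · subst hc
      rw [compAlong_diag_ones p q (hq1 x) j]
      exact hpm j h2 hjk x
    · obtain ⟨i, hi⟩ := exists_big_block hc
      exact compAlong_diag_zero p q c i
        (hqm _ hi (lt_of_le_of_lt (Composition.blocksFun_le c i) hjk) x)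
  · intro x
    classical
    have h0k : 0 < k := by omega
    have hne : (Composition.ones k) ≠ (Composition.single k h0k) := by
      intro h
      have := congrArg Composition.length h
      rw [Composition.ones_length, Composition.single_length] at this
      omega
    rw [comp_diag_sum]
    rw [← Finset.add_sum_erase _ _ (Finset.mem_univ (Composition.ones k))]
    rw [compAlong_diag_ones p q (hq1 x) k]
    congr 1
    rw [Finset.sum_eq_single_of_mem (Composition.single k h0k)
      (Finset.mem_erase.2 ⟨hne.symm, Finset.mem_univ _⟩)]
    · rw [compAlong_diag_single p q h0k x, hp1]
    · intro c hc hcsingle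
      have hcones : c ≠ Composition.ones k := (Finset.mem_erase.1 hc).1
      obtain ⟨i, hi⟩ := exists_big_block hcones
      have hlt : c.blocksFun i < k := (Composition.ne_single_iff h0k).1 hcsingle i
      exact compAlong_diag_zero p q c i (hqm _ hi hlt x)

lemma comp_linear_diag (q : FormalMultilinearSeries ℂ E E) (x : E) {k : ℕ} (hk : 1 ≤ k) :
    (q.comp ((ContinuousLinearMap.toSpanSingleton ℂ x).fpowerSeries 0)) k (fun _ => (1:ℂ))
      = q k (fun _ => x) := by
  set L := ContinuousLinearMap.toSpanSingleton ℂ x with hL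
  rw [comp_diag_sum]
  rw [Finset.sum_eq_single_of_mem (Composition.ones k) (Finset.mem_univ _)]
  · refine compAlong_diag_ones q _ ?_ k
    rw [ContinuousLinearMap.fpowerSeries_apply_one, continuousMultilinearCurryFin1_symm_apply]
    simp [hL, ContinuousLinearMap.toSpanSingleton_apply]
  · intro c _ hc
    obtain ⟨i, hi⟩ := exists_big_block hc
    apply compAlong_diag_zero
    obtain ⟨b, hb⟩ : ∃ b, c.blocksFun i = b + 2 := ⟨c.blocksFun i - 2, by omega⟩
    rw [hb, ContinuousLinearMap.fpowerSeries_apply_add_two]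
    rfl
lemma diag_coeff_bound [CompleteSpace E]
    {G : E → E} (hG : AnalyticOnNhd ℂ G (ball 0 1))
    (hGb : ∀ y ∈ ball (0:E) 1, ‖G y‖ ≤ 1)
    {q : FormalMultilinearSeries ℂ E E} (hq : HasFPowerSeriesAt G q 0)
    {x : E} (hx : ‖x‖ ≤ 1/2) {k : ℕ} (hk : 1 ≤ k) :
    ‖q k (fun _ => x)‖ ≤ 1 := by
  set L := ContinuousLinearMap.toSpanSingleton ℂ x with hL
  set R : ℝ≥0 := 3/2 with hR
  have hRpos : (0:ℝ≥0) < R := by rw [hR]; norm_num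
  have hRr : (R : ℝ) = 3/2 := by rw [hR]; norm_num
  have hmap : ∀ z : ℂ, ‖z‖ ≤ (R:ℝ) → L z ∈ ball (0:E) 1 := by
    intro z hz
    rw [mem_ball_zero_iff, hL, ContinuousLinearMap.toSpanSingleton_apply, norm_smul]
    calc ‖z‖ * ‖x‖ ≤ (3/2) * (1/2) := by
          apply mul_le_mul (by rw [hRr] at hz; exact hz) hx (norm_nonneg _) (by norm_num)
      _ < 1 := by norm_num
  have hdiff : DifferentiableOn ℂ (G ∘ L) (closedBall (0:ℂ) R) := by
    intro z hz
    have hz' : ‖z‖ ≤ (R:ℝ) := by rwa [mem_closedBall, dist_zero_right] at hz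
    exact ((hG _ (hmap z hz')).differentiableAt.comp z (L.differentiableAt)).differentiableWithinAt
  have h1 : HasFPowerSeriesOnBall (G ∘ L) (cauchyPowerSeries (G ∘ L) 0 R) 0 R :=
    hdiff.hasFPowerSeriesOnBall hRpos
  have h2 : HasFPowerSeriesAt (G ∘ L) (q.comp (L.fpowerSeries 0)) 0 := by
    have h0 : HasFPowerSeriesAt G q (L 0) := by rw [map_zero]; exact hq
    exact h0.comp (L.hasFPowerSeriesAt 0)
  have heq : q.comp (L.fpowerSeries 0) = cauchyPowerSeries (G ∘ L) 0 R :=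
    h2.eq_formalMultilinearSeries h1.hasFPowerSeriesAt
  have hcoeff : q k (fun _ => x) = cauchyPowerSeries (G ∘ L) 0 R k (fun _ => 1) := by
    rw [← comp_linear_diag q x hk, heq]
  rw [hcoeff]
  have hb1 : ‖cauchyPowerSeries (G ∘ L) 0 R k (fun _ => (1:ℂ))‖
      ≤ ‖cauchyPowerSeries (G ∘ L) 0 R k‖ := by
    have := (cauchyPowerSeries (G ∘ L) 0 R k).le_opNorm (fun _ => (1:ℂ))
    simpa using this
  have hb2 := norm_cauchyPowerSeries_le (G ∘ L) 0 R k
  have hint : (∫ θ : ℝ in (0)..2 * π, ‖(G ∘ L) (circleMap 0 R θ)‖) ≤ 2 * π := by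
    have hcont : Continuous fun θ : ℝ => (G ∘ L) (circleMap 0 (R:ℝ) θ) :=
      hdiff.continuousOn.comp_continuous (continuous_circleMap 0 (R:ℝ))
        (fun θ => circleMap_mem_closedBall 0 R.coe_nonneg θ)
    have hle : ∀ θ ∈ Set.Icc (0:ℝ) (2 * π), ‖(G ∘ L) (circleMap 0 (R:ℝ) θ)‖ ≤ 1 := by
      intro θ _
      apply hGb
      apply hmap
      have : ‖circleMap 0 (R:ℝ) θ‖ = |(R:ℝ)| := norm_circleMap_zero (R:ℝ) θ
      rw [this, abs_of_nonneg R.coe_nonneg]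
    calc (∫ θ : ℝ in (0)..2 * π, ‖(G ∘ L) (circleMap 0 R θ)‖)
        ≤ ∫ _ : ℝ in (0)..2 * π, (1:ℝ) :=
          intervalIntegral.integral_mono_on (by positivity)
            ((hcont.norm).intervalIntegrable _ _) intervalIntegrable_const hle
      _ = 2 * π := by simp
  calc ‖cauchyPowerSeries (G ∘ L) 0 R k (fun _ => (1:ℂ))‖
      ≤ ((2 * π)⁻¹ * ∫ θ : ℝ in (0)..2 * π, ‖(G ∘ L) (circleMap 0 R θ)‖) * |(R:ℝ)|⁻¹ ^ k :=
        le_trans hb1 hb2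
    _ ≤ 1 * 1 := by
        apply mul_le_mul
        · calc (2 * π)⁻¹ * ∫ θ : ℝ in (0)..2 * π, ‖(G ∘ L) (circleMap 0 R θ)‖
              ≤ (2 * π)⁻¹ * (2 * π) := by
                apply mul_le_mul_of_nonneg_left hint (by positivity)
            _ = 1 := by field_simp
        · apply pow_le_one₀ (by positivity)
          rw [abs_of_nonneg R.coe_nonneg, hRr]
          norm_num
        · positivity
        · norm_num
    _ = 1 := by norm_num
lemma cartan_diag_zero [CompleteSpace E] {F : E → E}
    (hA : AnalyticOnNhd ℂ F (ball 0 1)) (hmaps : MapsTo F (ball 0 1) (ball 0 1))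
    (h0 : F 0 = 0) {p : FormalMultilinearSeries ℂ E E} (hp : HasFPowerSeriesAt F p 0)
    (hp1 : ∀ y, p 1 (fun _ => y) = y) :
    ∀ k, 2 ≤ k → ∀ x, p k (fun _ => x) = 0 := by
  have hiter : ∀ n, AnalyticOnNhd ℂ F^[n] (ball 0 1) ∧ MapsTo F^[n] (ball 0 1) (ball 0 1) := by
    intro n
    induction n with
    | zero =>
      rw [Function.iterate_zero]
      exact ⟨analyticOnNhd_id, fun x hx => hx⟩
    | succ n ih =>
      rw [Function.iterate_succ']
      exact ⟨hA.comp ih.1 ih.2, hmaps.comp ih.2⟩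
  have hFn0 : ∀ n, F^[n] 0 = 0 := fun n => Function.iterate_fixed h0 n
  intro k
  induction k using Nat.strong_induction_on with
  | _ k IH =>
  intro hk x
  have hpm : ∀ j, 2 ≤ j → j < k → ∀ y, p j (fun _ => y) = 0 := fun j h2 hj y => IH j hj h2 y
  have key : ∀ n : ℕ, 1 ≤ n → ∃ q : FormalMultilinearSeries ℂ E E,
      HasFPowerSeriesAt F^[n] q 0 ∧ (∀ y, q 1 (fun _ => y) = y) ∧
      (∀ j, 2 ≤ j → j < k → ∀ y, q j (fun _ => y) = 0) ∧
      (∀ y, q k (fun _ => y) = n • p k (fun _ => y)) := by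
    intro n hn
    induction n with
    | zero => omega
    | succ n ihn =>
      rcases Nat.eq_or_lt_of_le hn with h1 | h1
      · refine ⟨p, ?_, hp1, hpm, ?_⟩
        · have : n + 1 = 1 := h1.symm
          rw [this, Function.iterate_one]
          exact hp
        · have : n = 0 := by omega
          subst this
          intro y; simp
      · obtain ⟨q, hq, hq1, hqm, hqk⟩ := ihn (by omega)
        obtain ⟨c1, c2, c3⟩ := comp_diag p q hk hp1 hpm hq1 hqm
        refine ⟨p.comp q, ?_, c1, c2, ?_⟩
        · rw [Function.iterate_succ']
          have hp' : HasFPowerSeriesAt F p (F^[n] 0) := by rw [hFn0]; exact hp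
          exact hp'.comp hq
        · intro y
          rw [c3, hqk y, succ_nsmul, add_comm]
  -- reduce to small vectors
  suffices hsmall : ∀ y : E, ‖y‖ ≤ 1/2 → p k (fun _ => y) = 0 by
    rcases eq_or_ne x 0 with rfl | hx0
    · exact ContinuousMultilinearMap.map_coord_zero _ (⟨0, by omega⟩ : Fin k) rfl
    · have hxn : (0:ℝ) < ‖x‖ := norm_pos_iff.2 hx0
      set c : ℂ := (((2 * ‖x‖)⁻¹ : ℝ) : ℂ) with hc
      have hc0 : c ≠ 0 := by
        rw [hc]
        simp only [ne_eq, Complex.ofReal_eq_zero, inv_eq_zero]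
        positivity
      have h1 : p k (fun _ => c • x) = 0 := by
        apply hsmall
        rw [norm_smul, hc, Complex.norm_real, Real.norm_eq_abs, abs_of_pos (by positivity)]
        rw [inv_mul_le_iff₀ (by positivity)]
        ring_nf
        nlinarith
      have h2 : p k (fun _ => c • x) = c ^ k • p k (fun _ => x) := by
        have := (p k).map_smul_univ (fun _ : Fin k => c) (fun _ : Fin k => x)
        simpa [Finset.prod_const] using this
      rw [h2] at h1
      rcases smul_eq_zero.1 h1 with h | h
      · exact absurd h (pow_ne_zero k hc0)
      · exact h
  intro y hy
  have key2 : ∀ n : ℕ, 1 ≤ n → (n : ℝ) * ‖p k (fun _ => y)‖ ≤ 1 := by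
    intro n hn
    obtain ⟨q, hq, _, _, hqk⟩ := key n hn
    have hb := diag_coeff_bound (hiter n).1
      (fun z hz => le_of_lt (mem_ball_zero_iff.1 ((hiter n).2 hz))) hq hy (k := k) (by omega)
    rw [hqk y] at hb
    have : ‖(n • p k (fun _ => y) : E)‖ = (n:ℝ) * ‖p k (fun _ => y)‖ := by
      rw [← Nat.cast_smul_eq_nsmul ℝ, norm_smul, Real.norm_natCast]
    rwa [this] at hb
  by_contra hne
  have hpos : 0 < ‖p k (fun _ => y)‖ := norm_pos_iff.2 hne
  obtain ⟨n, hn⟩ := exists_nat_gt (1 / ‖p k (fun _ => y)‖)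
  have hn1 : 1 ≤ n := by
    have h01 : 0 < 1 / ‖p k (fun _ => y)‖ := by positivity
    rcases Nat.eq_zero_or_pos n with rfl | h
    · norm_num at hn; linarith
    · exact h
  have := key2 n hn1
  rw [div_lt_iff₀ hpos] at hn
  linarith
/-- Cartan's uniqueness theorem. -/
lemma cartan [CompleteSpace E] {F : E → E}
    (hA : AnalyticOnNhd ℂ F (ball 0 1)) (hmaps : MapsTo F (ball 0 1) (ball 0 1))
    (h0 : F 0 = 0) (hd : ∀ y, fderiv ℂ F 0 y = y) :
    EqOn F id (ball 0 1) := by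
  obtain ⟨p, hp⟩ := hA 0 (mem_ball_self one_pos)
  have hp1 : ∀ y, p 1 (fun _ => y) = y := by
    intro y
    have h1 : fderiv ℂ F 0 = continuousMultilinearCurryFin1 ℂ E E (p 1) := hp.fderiv_eq
    have h2 : p 1 (fun _ => y) = fderiv ℂ F 0 y := by
      rw [h1, continuousMultilinearCurryFin1_apply]
      congr 1
    rw [h2, hd]
  have hk := cartan_diag_zero hA hmaps h0 hp hp1
  have hev : F =ᶠ[𝓝 (0:E)] id := by
    obtain ⟨r, hr⟩ := hp
    filter_upwards [EMetric.ball_mem_nhds (0:E) hr.r_pos] with y hy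
    have hsum := hr.sum (y := y) hy
    rw [zero_add] at hsum
    rw [hsum]
    have hdef : p.sum y = ∑' n, p n (fun _ => y) := rfl
    rw [hdef, tsum_eq_single 1 ?_]
    · exact hp1 y
    · intro n hn
      match n, hn with
      | 0, _ =>
        have := hr.coeff_zero (fun _ => y)
        rw [this, h0]
      | (m+2), _ => exact hk (m+2) (by omega) y
  exact hA.eqOn_of_preconnected_of_eventuallyEq analyticOnNhd_id
    (convex_ball (0:E) 1).isPreconnected (mem_ball_self one_pos) hev
end Stmt0Aux

open Stmt0Aux Set Metric Function

/-- Let `E₁`, `E₂` be complex Banach spaces with open unit balls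
`B₁`, `B₂`, and `f : B₁ → B₂` holomorphic with `f 0 = 0` whose derivative at `0` is an
isometry. If there is a continuous linear projection `π` of `E₂` of norm `1` with range
`f'(0)(E₁)`, then `f` is injective on `B₁` and is a biholomorphism of `B₁` onto `f(B₁)`:
there is a map `g`, holomorphic on `f(B₁)` (within `f(B₁)`), with `g (f x) = x` on `B₁`. -/
theorem stmt0
    {E₁ E₂ : Type*} [NormedAddCommGroup E₁] [NormedSpace ℂ E₁] [CompleteSpace E₁]
    [NormedAddCommGroup E₂] [NormedSpace ℂ E₂] [CompleteSpace E₂]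
    (B₁ : Set E₁) (B₂ : Set E₂) (hB₁ : B₁ = Metric.ball 0 1) (hB₂ : B₂ = Metric.ball 0 1)
    (f : E₁ → E₂) (hf : AnalyticOnNhd ℂ f B₁) (hmaps : Set.MapsTo f B₁ B₂)
    (hf0 : f 0 = 0)
    (hisom : ∀ x : E₁, ‖fderiv ℂ f 0 x‖ = ‖x‖)
    (hπ : ∃ π : E₂ →L[ℂ] E₂, (∀ y, π (π y) = π y) ∧
      Set.range π = Set.range (fderiv ℂ f 0) ∧ ‖π‖ = 1) :
    Set.InjOn f B₁ ∧
      ∃ g : E₂ → E₁, AnalyticOn ℂ g (f '' B₁) ∧ ∀ x ∈ B₁, g (f x) = x := by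
  subst hB₁ hB₂
  obtain ⟨π, hidem, hrange, hnorm⟩ := hπ
  set T : E₁ →L[ℂ] E₂ := fderiv ℂ f 0 with hT
  let J : E₁ →ₗᵢ[ℂ] E₂ := ⟨T.toLinearMap, hisom⟩
  have hJT : ∀ x, J x = T x := fun x => rfl
  have hmem : ∀ y : E₂, π y ∈ LinearMap.range J.toLinearMap := by
    intro y
    have h1 : π y ∈ Set.range π := ⟨y, rfl⟩
    rw [hrange] at h1
    obtain ⟨z, hz⟩ := h1
    exact ⟨z, hz⟩
  let Gc : E₂ →L[ℂ] E₁ :=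
    (J.equivRange.symm.toContinuousLinearEquiv.toContinuousLinearMap).comp
      (π.codRestrict (LinearMap.range J.toLinearMap) hmem)
  have hGc : ∀ y, Gc y = J.equivRange.symm ⟨π y, hmem y⟩ := fun _ => rfl
  have hfix : ∀ y, y ∈ Set.range π → π y = y := by
    rintro y ⟨z, rfl⟩
    exact hidem z
  have hGT : ∀ x, Gc (T x) = x := by
    intro x
    rw [hGc]
    have h1 : π (T x) = T x := hfix _ (by rw [hrange]; exact ⟨x, rfl⟩)
    have h2 : (⟨π (T x), hmem (T x)⟩ : LinearMap.range J.toLinearMap) = J.equivRange x := by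
      apply Subtype.ext
      show π (T x) = ((J.equivRange x : E₂))
      rw [h1]
      exact (hJT x).symm
    rw [h2, LinearIsometryEquiv.symm_apply_apply]
  have hGnorm : ∀ y, ‖Gc y‖ ≤ ‖y‖ := by
    intro y
    rw [hGc, LinearIsometryEquiv.norm_map]
    have h3 : ‖(⟨π y, hmem y⟩ : LinearMap.range J.toLinearMap)‖ = ‖π y‖ := rfl
    rw [h3]
    calc ‖π y‖ ≤ ‖π‖ * ‖y‖ := π.le_opNorm y
      _ = ‖y‖ := by rw [hnorm, one_mul]
  set Fm : E₁ → E₁ := fun x => Gc (f x) with hFm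
  have h0m : (0:E₁) ∈ ball (0:E₁) 1 := mem_ball_self one_pos
  have hFA : AnalyticOnNhd ℂ Fm (ball 0 1) :=
    (Gc.analyticOnNhd (Set.univ)).comp hf (mapsTo_univ f _)
  have hFmaps : MapsTo Fm (ball 0 1) (ball 0 1) := by
    intro x hx
    rw [mem_ball_zero_iff]
    calc ‖Gc (f x)‖ ≤ ‖f x‖ := hGnorm _
      _ < 1 := mem_ball_zero_iff.1 (hmaps hx)
  have hF0 : Fm 0 = 0 := by
    simp only [hFm, hf0, map_zero]
  have hFd : ∀ y, fderiv ℂ Fm 0 y = y := by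
    intro y
    have hdf : DifferentiableAt ℂ f 0 := (hf 0 h0m).differentiableAt
    have hcomp : fderiv ℂ (⇑Gc ∘ f) 0 = (fderiv ℂ Gc (f 0)).comp (fderiv ℂ f 0) :=
      fderiv_comp 0 (Gc.differentiableAt) hdf
    have heq : fderiv ℂ Fm 0 = Gc.comp T := by
      rw [show Fm = ⇑Gc ∘ f from rfl, hcomp, Gc.fderiv]
    rw [heq]
    exact hGT y
  have hcartan := cartan hFA hFmaps hF0 hFd
  constructor
  · intro a ha b hb hab
    calc a = Fm a := (hcartan ha).symm
      _ = Fm b := by simp only [hFm, hab]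
      _ = b := hcartan hb
  · exact ⟨⇑Gc, (Gc.analyticOn _), fun x hx => hcartan hx⟩
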